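/- arXiv:2303.11503 — 3 statements merged into one kernel-verified Lean document; each statement's English description precedes it below -/
import Mathlib

section
/- If G is a connected graph on n vertices with maximum degree Δ ≥ 1, then μ₁(G) = Δ + 1 if and only if Δ = n − 1. -/
open Matrix

/-- Sorted (nonincreasing) list of eigenvalues of a matrix, empty if not Hermitian. -/
noncomputable def heigList {𝕜 : Type} [RCLike 𝕜] {m : Type} [Fintype m] [DecidableEq m]
    (M : Matrix m m 𝕜) : List ℝ :=
  if h : M.IsHermitian then (Finset.univ.val.map h.eigenvalues).sort (· ≥ ·) else []

/-- `kthEig M k` is the k-th largest eigenvalue of `M` (1-indexed). -/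
noncomputable def kthEig {𝕜 : Type} [RCLike 𝕜] {m : Type} [Fintype m] [DecidableEq m]
    (M : Matrix m m 𝕜) (k : ℕ) : ℝ :=
  (heigList M).getD (k - 1) 0

/-- Laplacian matrix of a simple graph on a finite vertex type, over ℝ. -/
noncomputable def lapMat {V : Type} [Fintype V] [DecidableEq V] (G : SimpleGraph V) :
    Matrix V V ℝ :=
  letI := Classical.decRel G.Adj
  G.lapMatrix ℝ

/-- `lapμ G k` is the k-th largest Laplacian eigenvalue of `G` (1-indexed). -/
noncomputable def lapμ {V : Type} [Fintype V] [DecidableEq V] (G : SimpleGraph V) (k : ℕ) : ℝ :=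
  kthEig (lapMat G) k

/-- Number of Laplacian eigenvalues of `G` in the closed interval `[a, b]`, with multiplicity. -/
noncomputable def mIcc {V : Type} [Fintype V] [DecidableEq V] (G : SimpleGraph V) (a b : ℝ) : ℕ :=
  ((heigList (lapMat G)).filter (fun x => a ≤ x ∧ x ≤ b)).length

section SpecAux

variable {m : Type} [Fintype m] [DecidableEq m] (M : Matrix m m ℝ) (hM : M.IsHermitian)

lemma heigList_eq : heigList M = (Finset.univ.val.map hM.eigenvalues).sort (· ≥ ·) := by
  rw [heigList, dif_pos hM]

lemma mem_heigList (i : m) : hM.eigenvalues i ∈ heigList M := by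
  rw [heigList_eq M hM, Multiset.mem_sort]
  exact Multiset.mem_map_of_mem _ (Finset.mem_univ_val i)

lemma heigList_sorted : (heigList M).Pairwise (· ≥ ·) := by
  by_cases h : M.IsHermitian
  · rw [heigList_eq M h]; exact Multiset.pairwise_sort _ _
  · rw [heigList, dif_neg h]; exact List.Pairwise.nil

lemma le_kthEig_one [Nonempty m] {a : ℝ} (ha : a ∈ heigList M) : a ≤ kthEig M 1 := by
  have hs := heigList_sorted M
  unfold kthEig
  rcases hl : heigList M with _ | ⟨b, t⟩
  · rw [hl] at ha; simp at ha
  · rw [hl] at ha hs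
    rw [List.pairwise_cons] at hs
    simp only [List.getD]
    rcases List.mem_cons.mp ha with h | h
    · subst h; simp
    · simpa using hs.1 a h

lemma exists_eigenvalues_eq [Nonempty m] : ∃ i, hM.eigenvalues i = kthEig M 1 := by
  have hne : heigList M ≠ [] := by
    have hlen : (heigList M).length = Fintype.card m := by
      rw [heigList_eq M hM]
      simp [Multiset.length_sort]
    intro h
    rw [h] at hlen
    simp at hlen
    exact Fintype.card_ne_zero hlen.symm
  have hmem : kthEig M 1 ∈ heigList M := by
    unfold kthEig
    rcases hl : heigList M with _ | ⟨b, t⟩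
    · exact absurd hl hne
    · simp
  rw [heigList_eq M hM, Multiset.mem_sort] at hmem
  obtain ⟨i, _, hi⟩ := Multiset.mem_map.mp hmem
  exact ⟨i, hi⟩

lemma smul_one_sub_psd (μ : ℝ) (hle : ∀ i, hM.eigenvalues i ≤ μ) :
    (μ • (1 : Matrix m m ℝ) - M).PosSemidef := by
  have hU : (hM.eigenvectorUnitary : Matrix m m ℝ) * star (hM.eigenvectorUnitary : Matrix m m ℝ)
      = 1 := Matrix.mem_unitaryGroup_iff.mp hM.eigenvectorUnitary.2
  have key : μ • (1 : Matrix m m ℝ) - M =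
      (hM.eigenvectorUnitary : Matrix m m ℝ) * diagonal (fun i => μ - hM.eigenvalues i)
        * (hM.eigenvectorUnitary : Matrix m m ℝ)ᴴ := by
    have hspec := hM.spectral_theorem
    rw [Unitary.conjStarAlgAut_apply] at hspec
    rw [Matrix.star_eq_conjTranspose] at hU hspec
    have hdiag : diagonal (fun i => μ - hM.eigenvalues i) =
        μ • (1 : Matrix m m ℝ) - diagonal (RCLike.ofReal ∘ hM.eigenvalues) := by
      ext i j
      by_cases h : i = j <;>
        simp [Matrix.diagonal_apply, h, Matrix.one_apply, RCLike.ofReal_real_eq_id]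
    rw [hdiag, Matrix.mul_sub, Matrix.sub_mul, Matrix.mul_smul, mul_one, Matrix.smul_mul, hU,
      ← hspec]
  rw [key]
  exact (Matrix.posSemidef_diagonal_iff.mpr
    (fun i => by linarith [hle i])).mul_mul_conjTranspose_same _

lemma quadform_le_of_psd (μ : ℝ) (h : (μ • (1 : Matrix m m ℝ) - M).PosSemidef) (x : m → ℝ) :
    x ⬝ᵥ (M *ᵥ x) ≤ μ * (x ⬝ᵥ x) := by
  have h2 := h.dotProduct_mulVec_nonneg x
  rw [star_trivial, Matrix.sub_mulVec, dotProduct_sub, Matrix.smul_mulVec,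
    Matrix.one_mulVec, dotProduct_smul] at h2
  simp only [smul_eq_mul] at h2
  linarith

lemma dotProduct_self_pos' {u : m → ℝ} (hne : u ≠ 0) : 0 < u ⬝ᵥ u := by
  have h0 : (0:ℝ) ≤ u ⬝ᵥ u := Finset.sum_nonneg fun j _ => mul_self_nonneg _
  exact h0.lt_of_ne (fun h => hne (dotProduct_self_eq_zero.mp h.symm))

lemma eigenvalue_le_of_quadform_le (i : m) (c : ℝ)
    (hc : ∀ x : m → ℝ, x ⬝ᵥ (M *ᵥ x) ≤ c * (x ⬝ᵥ x)) :
    hM.eigenvalues i ≤ c := by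
  set u : m → ℝ := ⇑(hM.eigenvectorBasis i) with hu
  have hmv : M *ᵥ u = hM.eigenvalues i • u := hM.mulVec_eigenvectorBasis i
  have hne : u ≠ 0 := by
    intro h0
    exact hM.eigenvectorBasis.orthonormal.ne_zero i (by ext j; exact congrFun h0 j)
  have hpos : 0 < u ⬝ᵥ u := dotProduct_self_pos' hne
  have hq := hc u
  rw [hmv, dotProduct_smul, smul_eq_mul] at hq
  exact le_of_mul_le_mul_right (by linarith) hpos

include hM in
lemma quadform_le_kthEig [Nonempty m] (x : m → ℝ) :
    x ⬝ᵥ (M *ᵥ x) ≤ kthEig M 1 * (x ⬝ᵥ x) :=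
  quadform_le_of_psd M _ (smul_one_sub_psd M hM _
    (fun i => le_kthEig_one M (mem_heigList M hM i))) x

include hM in
lemma kthEig_le [Nonempty m] (c : ℝ) (hc : ∀ x : m → ℝ, x ⬝ᵥ (M *ᵥ x) ≤ c * (x ⬝ᵥ x)) :
    kthEig M 1 ≤ c := by
  obtain ⟨i, hi⟩ := exists_eigenvalues_eq M hM
  rw [← hi]
  exact eigenvalue_le_of_quadform_le M hM i c hc

end SpecAux

section GraphAux

variable {V : Type} [Fintype V] [DecidableEq V] (G : SimpleGraph V) [DecidableRel G.Adj]

lemma lapMat_eq : lapMat G = G.lapMatrix ℝ := by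
  unfold lapMat
  congr!

lemma lap_quadform (x : V → ℝ) :
    x ⬝ᵥ (G.lapMatrix ℝ *ᵥ x) =
      (∑ i : V, ∑ j : V, if G.Adj i j then (x i - x j)^2 else 0) / 2 := by
  rw [← Matrix.toLinearMap₂'_apply', SimpleGraph.lapMatrix_toLinearMap₂']

lemma lap_quadform_le_card (x : V → ℝ) :
    x ⬝ᵥ (G.lapMatrix ℝ *ᵥ x) ≤ (Fintype.card V : ℝ) * (x ⬝ᵥ x) := by
  rw [lap_quadform]
  have h1 : (∑ i : V, ∑ j : V, if G.Adj i j then (x i - x j)^2 else 0) ≤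
      ∑ i : V, ∑ j : V, (x i - x j)^2 := by
    refine Finset.sum_le_sum fun i _ => Finset.sum_le_sum fun j _ => ?_
    split
    · exact le_rfl
    · positivity
  have hdot : x ⬝ᵥ x = ∑ i : V, x i ^ 2 := by simp [dotProduct, sq]
  have h2 : ∑ i : V, ∑ j : V, (x i - x j)^2 =
      2 * (Fintype.card V : ℝ) * (x ⬝ᵥ x) - 2 * (∑ i : V, x i)^2 := by
    rw [hdot]
    have expand : ∀ i j : V, (x i - x j)^2 = x i^2 - 2*(x i * x j) + x j^2 := fun i j => by ring
    simp only [expand, Finset.sum_add_distrib, Finset.sum_sub_distrib, Finset.sum_const,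
      Finset.card_univ, nsmul_eq_mul, ← Finset.mul_sum, ← Finset.sum_mul]
    ring
  have h3 : (0:ℝ) ≤ (∑ i : V, x i)^2 := sq_nonneg _
  nlinarith

lemma sum_ite_adj (v : V) (c : ℝ) :
    ∑ j : V, (if G.Adj v j then c else 0) = (G.degree v : ℝ) * c := by
  rw [Finset.sum_ite, Finset.sum_const, Finset.sum_const, ← SimpleGraph.neighborFinset_eq_filter,
    SimpleGraph.card_neighborFinset_eq_degree]
  simp [mul_comm]

lemma lapμ_quadform [Nonempty V] (x : V → ℝ) :
    x ⬝ᵥ (G.lapMatrix ℝ *ᵥ x) ≤ lapμ G 1 * (x ⬝ᵥ x) := by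
  have hM : (G.lapMatrix ℝ).IsHermitian := (SimpleGraph.posSemidef_lapMatrix ℝ G).1
  have := quadform_le_kthEig (G.lapMatrix ℝ) hM x
  unfold lapμ
  rw [lapMat_eq]
  exact this

lemma lapμ_le_card [Nonempty V] : lapμ G 1 ≤ (Fintype.card V : ℝ) := by
  have hM : (G.lapMatrix ℝ).IsHermitian := (SimpleGraph.posSemidef_lapMatrix ℝ G).1
  unfold lapμ
  rw [lapMat_eq]
  exact kthEig_le (G.lapMatrix ℝ) hM _ (lap_quadform_le_card G)

lemma forward_test (v : V) (hadj : ∀ u, u ≠ v → G.Adj v u) (n : ℕ) (hn : n = Fintype.card V)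
    (hn2 : 2 ≤ n) (hdeg : G.degree v = n - 1) :
    ∃ x : V → ℝ,
      (∑ i : V, ∑ j : V, if G.Adj i j then (x i - x j)^2 else 0) / 2 = (n:ℝ) * (x ⬝ᵥ x)
        ∧ 0 < x ⬝ᵥ x := by
  set x : V → ℝ := fun a => if a = v then (n : ℝ) - 1 else -1 with hxdef
  refine ⟨x, ?_, ?_⟩
  · have hdegR : (G.degree v : ℝ) = (n : ℝ) - 1 := by
      rw [hdeg]; push_cast [Nat.cast_sub (by omega : 1 ≤ n)]; ring
    have hptwise : ∀ i j : V, (if G.Adj i j then (x i - x j)^2 else 0) =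
        (if i = v then (if G.Adj v j then (n:ℝ)^2 else 0) else 0)
        + (if j = v then (if G.Adj v i then (n:ℝ)^2 else 0) else 0) := by
      intro i j
      by_cases hi : i = v
      · by_cases hj : j = v
        · rw [hi, hj]; simp [G.irrefl]
        · have hAvj : G.Adj v j := hadj j hj
          have hA : G.Adj i j := by rw [hi]; exact hAvj
          have hxi : x i = (n:ℝ) - 1 := if_pos hi
          have hxj : x j = -1 := if_neg hj
          rw [if_pos hA, if_pos hi, if_neg hj, if_pos hAvj, hxi, hxj]
          ring
      · by_cases hj : j = v
        · have hAvi : G.Adj v i := hadj i hi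
          have hA : G.Adj i j := by rw [hj]; exact hAvi.symm
          have hxi : x i = -1 := if_neg hi
          have hxj : x j = (n:ℝ) - 1 := if_pos hj
          rw [if_pos hA, if_neg hi, if_pos hj, if_pos hAvi, hxi, hxj]
          ring
        · have hxi : x i = -1 := if_neg hi
          have hxj : x j = -1 := if_neg hj
          simp [hxi, hxj, hi, hj]
    have hsum : (∑ i : V, ∑ j : V, if G.Adj i j then (x i - x j)^2 else 0)
        = 2 * ((n:ℝ) - 1) * (n:ℝ)^2 := by
      simp only [hptwise, Finset.sum_add_distrib, Finset.sum_ite_irrel, Finset.sum_const_zero,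
        Finset.sum_ite_eq', Finset.mem_univ, if_true, sum_ite_adj, hdegR]
      ring
    have hxx : x ⬝ᵥ x = ((n:ℝ) - 1) * (n:ℝ) := by
      have hterm : ∀ a : V, x a * x a = (if a = v then ((n:ℝ)-1)^2 - 1 else 0) + 1 := by
        intro a
        by_cases hh : a = v <;> simp [x, hh] <;> ring
      rw [dotProduct]
      simp only [hterm, Finset.sum_add_distrib, Finset.sum_ite_eq', Finset.mem_univ, if_true,
        Finset.sum_const, Finset.card_univ, ← hn, nsmul_eq_mul, mul_one]
      ring
    rw [hsum, hxx]; ring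
  · apply dotProduct_self_pos'
    intro h0
    have hxv : x v = 0 := congrFun h0 v
    simp only [hxdef, if_pos rfl] at hxv
    have : (2:ℝ) ≤ (n:ℝ) := by exact_mod_cast hn2
    linarith

lemma strict_test (v u w : V) (hu : G.Adj v u) (hw1 : ¬ G.Adj v w) (hw2 : w ≠ v)
    (huw : G.Adj u w) (hΔ : 1 ≤ G.degree v) :
    ∃ x : V → ℝ, ((G.degree v : ℝ) + 1) * (x ⬝ᵥ x) <
      (∑ i : V, ∑ j : V, if G.Adj i j then (x i - x j)^2 else 0) / 2 ∧ x ≠ 0 := by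
  set Δ : ℝ := (G.degree v : ℝ) with hΔdef
  have hΔ1 : (1:ℝ) ≤ Δ := by rw [hΔdef]; exact_mod_cast hΔ
  have hΔ0 : (0:ℝ) < Δ := by linarith
  set c : ℝ := 1 / Δ with hcdef
  have hc0 : 0 < c := by rw [hcdef]; positivity
  have hcΔ : c * Δ = 1 := by rw [hcdef]; field_simp
  set x : V → ℝ := fun a => if a = v then Δ else if G.Adj v a then -1 else if a = w then c else 0
    with hxdef
  refine ⟨x, ?_, ?_⟩
  swap
  · intro h0
    have hxv0 : x v = 0 := congrFun h0 v
    simp only [hxdef, if_pos rfl] at hxv0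
    linarith
  have hxv : x v = Δ := if_pos rfl
  have hxu : x u = -1 := by
    have : u ≠ v := (hu.ne).symm
    simp only [hxdef, if_neg this, if_pos hu]
  have hxw : x w = c := by
    simp [hxdef, hw2, hw1]
  have hxN : ∀ a, G.Adj v a → x a = -1 := by
    intro a ha
    have : a ≠ v := ha.ne'
    simp only [hxdef, if_neg this, if_pos ha]
  have hxx : x ⬝ᵥ x = Δ^2 + Δ + c^2 := by
    have hterm : ∀ a : V, x a * x a =
        (if a = v then Δ^2 else 0) + (if G.Adj v a then 1 else 0) + (if a = w then c^2 else 0) := by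
      intro a
      by_cases h1 : a = v
      · have h2 : ¬ G.Adj v a := by rw [h1]; exact G.irrefl
        have h3 : a ≠ w := by rw [h1]; exact fun hh => hw2 hh.symm
        simp only [hxdef, if_pos h1, if_neg h2, if_neg h3]
        ring
      · by_cases h2 : G.Adj v a
        · have h3 : a ≠ w := fun hh => hw1 (hh ▸ h2)
          simp only [hxdef, if_neg h1, if_pos h2, if_neg h3]
          ring
        · by_cases h3 : a = w
          · simp only [hxdef, if_neg h1, if_neg h2, if_pos h3]; ring
          · simp only [hxdef, if_neg h1, if_neg h2, if_neg h3]; ring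
    rw [dotProduct]
    simp only [hterm, Finset.sum_add_distrib, Finset.sum_ite_eq', Finset.mem_univ, if_true,
      sum_ite_adj, mul_one, ← hΔdef]
  set F : V → V → ℝ := fun i j => if G.Adj i j then (x i - x j)^2 else 0 with hFdef
  have hFnonneg : ∀ p : V × V, p ∈ Finset.univ → 0 ≤ F p.1 p.2 := by
    intro p _
    simp only [hFdef]
    split
    · positivity
    · exact le_rfl
  set N := G.neighborFinset v with hNdef
  set T : Finset (V × V) := (({v} ×ˢ N) ∪ (N ×ˢ {v})) ∪ {(u,w), (w,u)} with hTdef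
  have huv : u ≠ v := hu.ne'
  have huN : u ∈ N := (G.mem_neighborFinset v u).mpr hu
  have hwN : w ∉ N := fun hh => hw1 ((G.mem_neighborFinset v w).mp hh)
  have huw' : u ≠ w := huw.ne
  have hsumT : ∑ p ∈ T, F p.1 p.2 = 2 * Δ * (Δ + 1)^2 + 2 * (1 + c)^2 := by
    have hd12 : Disjoint ({v} ×ˢ N) (N ×ˢ {v}) := by
      rw [Finset.disjoint_left]
      rintro ⟨a, b⟩ h1 h2
      simp only [Finset.mem_product, Finset.mem_singleton] at h1 h2
      have hvN : v ∈ N := by rw [← h1.1]; exact h2.1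
      exact G.irrefl ((G.mem_neighborFinset v v).mp hvN)
    have hd3 : Disjoint (({v} ×ˢ N) ∪ (N ×ˢ {v})) ({(u,w), (w,u)} : Finset (V × V)) := by
      rw [Finset.disjoint_right]
      rintro ⟨a, b⟩ h1 h2
      simp only [Finset.mem_insert, Finset.mem_singleton, Prod.mk.injEq] at h1
      simp only [Finset.mem_union, Finset.mem_product, Finset.mem_singleton] at h2
      rcases h1 with ⟨ha, hb⟩ | ⟨ha, hb⟩ <;> subst ha <;> subst hb
      · rcases h2 with ⟨h2a, _⟩ | ⟨_, h2b⟩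
        · exact huv h2a
        · exact hw2 h2b
      · rcases h2 with ⟨h2a, _⟩ | ⟨_, h2b⟩
        · exact hw2 h2a
        · exact huv h2b
    rw [hTdef, Finset.sum_union hd3, Finset.sum_union hd12]
    have h1 : ∑ p ∈ ({v} ×ˢ N), F p.1 p.2 = Δ * (Δ + 1)^2 := by
      rw [Finset.sum_product, Finset.sum_singleton]
      have hcongr : ∀ j ∈ N, F v j = (Δ + 1)^2 := by
        intro j hj
        have hadj : G.Adj v j := (G.mem_neighborFinset v j).mp hj
        simp only [hFdef, if_pos hadj, hxv, hxN j hadj]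
        ring
      rw [Finset.sum_congr rfl hcongr, Finset.sum_const,
        SimpleGraph.card_neighborFinset_eq_degree, nsmul_eq_mul, ← hΔdef]
    have h2 : ∑ p ∈ (N ×ˢ {v}), F p.1 p.2 = Δ * (Δ + 1)^2 := by
      rw [Finset.sum_product]
      have hcongr : ∀ i ∈ N, ∑ j ∈ {v}, F i j = (Δ + 1)^2 := by
        intro i hi
        rw [Finset.sum_singleton]
        have hadj : G.Adj v i := (G.mem_neighborFinset v i).mp hi
        simp only [hFdef, if_pos hadj.symm, hxv, hxN i hadj]
        ring
      rw [Finset.sum_congr rfl hcongr, Finset.sum_const,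
        SimpleGraph.card_neighborFinset_eq_degree, nsmul_eq_mul, ← hΔdef]
    have h3 : ∑ p ∈ ({(u,w), (w,u)} : Finset (V × V)), F p.1 p.2 = 2 * (1 + c)^2 := by
      rw [Finset.sum_pair (fun hh => huw' (congrArg Prod.fst hh))]
      simp only [hFdef, if_pos huw, if_pos huw.symm, hxu, hxw]
      ring
    rw [h1, h2, h3]
    ring
  have hTsub : T ⊆ Finset.univ ×ˢ Finset.univ :=
    fun p _ => Finset.mem_product.mpr ⟨Finset.mem_univ _, Finset.mem_univ _⟩
  have hlb : 2 * Δ * (Δ + 1)^2 + 2 * (1 + c)^2 ≤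
      ∑ i : V, ∑ j : V, if G.Adj i j then (x i - x j)^2 else 0 := by
    rw [← hsumT, ← Finset.sum_product' (f := F)]
    exact Finset.sum_le_sum_of_subset_of_nonneg hTsub
      (fun p hp _ => hFnonneg p (Finset.mem_univ p))
  rw [hxx]
  nlinarith [hlb, sq_nonneg c, hc0, hΔ0, hcΔ, hΔ1, mul_pos hc0 hc0]

end GraphAux

theorem lapμ_one_eq_maxDegree_add_one_iff {V : Type} [Fintype V] [DecidableEq V]
    (G : SimpleGraph V) [DecidableRel G.Adj] (hG : G.Connected) (h : 1 ≤ G.maxDegree) :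
    lapμ G 1 = (G.maxDegree : ℝ) + 1 ↔ G.maxDegree = Fintype.card V - 1 := by
  have hne : Nonempty V := hG.nonempty
  set n := Fintype.card V with hn
  have hn1 : 1 ≤ n := Fintype.card_pos
  obtain ⟨v, hv⟩ := G.exists_maximal_degree_vertex
  have hdegmax : 1 ≤ G.degree v := by rw [← hv]; exact h
  constructor
  · intro hμ
    by_contra hΔne
    have hΔlt : G.maxDegree < n - 1 := by
      have := G.maxDegree_lt_card_verts
      omega
    -- find a vertex outside the closed neighborhood of v
    set Sf : Finset V := insert v (G.neighborFinset v) with hSf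
    have hScard : Sf.card < n := by
      calc Sf.card ≤ (G.neighborFinset v).card + 1 := Finset.card_insert_le _ _
        _ = G.degree v + 1 := by rw [SimpleGraph.card_neighborFinset_eq_degree]
        _ ≤ G.maxDegree + 1 := by have := G.degree_le_maxDegree v; omega
        _ < n := by omega
    have hw0 : ∃ w0, w0 ∉ Sf := by
      by_contra hall
      push_neg at hall
      have : Sf = Finset.univ := Finset.eq_univ_iff_forall.mpr hall
      rw [this, Finset.card_univ] at hScard
      omega
    obtain ⟨w0, hw0⟩ := hw0
    obtain ⟨p⟩ := hG.preconnected v w0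
    obtain ⟨d, _, hdS, hdS'⟩ := p.exists_boundary_dart (↑Sf : Set V)
      (by simp [hSf]) (by simpa using hw0)
    have hadjd : G.Adj d.fst d.snd := d.adj
    have hfst_ne : d.fst ≠ v := by
      intro hfv
      apply hdS'
      have : G.Adj v d.snd := by rw [← hfv]; exact hadjd
      simp [hSf, SimpleGraph.mem_neighborFinset, this]
    have hfstN : G.Adj v d.fst := by
      have : d.fst ∈ Sf := hdS
      rw [hSf, Finset.mem_insert] at this
      rcases this with hh | hh
      · exact absurd hh hfst_ne
      · exact (G.mem_neighborFinset v d.fst).mp hh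
    have hsnd_nadj : ¬ G.Adj v d.snd := by
      intro hh
      exact hdS' (by simp [hSf, SimpleGraph.mem_neighborFinset, hh])
    have hsnd_ne : d.snd ≠ v := by
      intro hh
      exact hdS' (by simp [hSf, hh])
    obtain ⟨x, hx, hxne⟩ := strict_test G v d.fst d.snd hfstN hsnd_nadj hsnd_ne hadjd hdegmax
    have hq : x ⬝ᵥ (G.lapMatrix ℝ *ᵥ x) ≤ lapμ G 1 * (x ⬝ᵥ x) := lapμ_quadform G x
    rw [lap_quadform] at hq
    rw [hμ, hv] at hq
    exact absurd (lt_of_lt_of_le hx hq) (lt_irrefl _)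
  · intro hΔ
    have hdeg : G.degree v = n - 1 := by rw [← hv, hΔ]
    have hn2 : 2 ≤ n := by omega
    have hadj : ∀ u, u ≠ v → G.Adj v u := by
      have hsub : G.neighborFinset v ⊆ Finset.univ.erase v := fun a ha =>
        Finset.mem_erase.mpr ⟨((G.mem_neighborFinset v a).mp ha).ne', Finset.mem_univ a⟩
      have hcard : (Finset.univ.erase v).card = n - 1 := by
        rw [Finset.card_erase_of_mem (Finset.mem_univ v), Finset.card_univ]
      have heq := Finset.eq_of_subset_of_card_le hsub
        (by rw [hcard, SimpleGraph.card_neighborFinset_eq_degree, hdeg])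
      intro a ha
      exact (G.mem_neighborFinset v a).mp
        (heq ▸ Finset.mem_erase.mpr ⟨ha, Finset.mem_univ a⟩)
    have hcast : ((G.maxDegree : ℝ)) + 1 = (n:ℝ) := by
      rw [hΔ]
      have : (n - 1) + 1 = n := by omega
      exact_mod_cast congrArg (Nat.cast : ℕ → ℝ) this
    rw [hcast]
    apply le_antisymm
    · exact lapμ_le_card G
    · obtain ⟨x, hx, hxpos⟩ := forward_test G v hadj n hn hn2 hdeg
      have hq : x ⬝ᵥ (G.lapMatrix ℝ *ᵥ x) ≤ lapμ G 1 * (x ⬝ᵥ x) := lapμ_quadform G x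
      rw [lap_quadform, hx] at hq
      exact le_of_mul_le_mul_right hq hxpos
end

section
/- Let A and B be Hermitian matrices of order n and let 1 ≤ i, j ≤ n with i + j − 1 ≤ n. Then ρ_{i+j−1}(A+B) ≤ ρ_i(A) + ρ_j(B), where ρ_k(M) denotes the k-th largest eigenvalue of M. Moreover, equality holds if and only if there exists a nonzero vector x with (A+B)x = ρ_{i+j−1}(A+B)x, Ax = ρ_i(A)x, and Bx = ρ_j(B)x. -/
open Matrix

open Finset Submodule

variable {n : ℕ}

/-- the sorted (nonincreasing) eigenvalue function -/
noncomputable def sμ {M : Matrix (Fin n) (Fin n) ℂ} (hM : M.IsHermitian) : Fin n → ℝ :=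
  fun k => hM.eigenvalues (Tuple.sort hM.eigenvalues k.rev)

lemma sμ_antitone {M : Matrix (Fin n) (Fin n) ℂ} (hM : M.IsHermitian) :
    Antitone (sμ hM) := by
  intro a b hab
  exact Tuple.monotone_sort hM.eigenvalues (Fin.rev_le_rev.mpr hab)

lemma heigList_eq_s4 {M : Matrix (Fin n) (Fin n) ℂ} (hM : M.IsHermitian) :
    heigList M = List.ofFn (sμ hM) := by
  rw [heigList, dif_pos hM]
  refine List.Perm.eq_of_pairwise' (Multiset.pairwise_sort _ _) ?_ ?_
  rotate_left
  · apply Multiset.coe_eq_coe.mp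
    rw [Multiset.sort_eq, ← Fin.univ_val_map (sμ hM)]
    show _ = Multiset.map (hM.eigenvalues ∘ (Fin.revPerm.trans (Tuple.sort hM.eigenvalues))) _
    rw [← Multiset.map_map, Multiset.map_univ_val_equiv]
  · rw [List.pairwise_ofFn]
    intro a b hab
    exact sμ_antitone hM hab.le

lemma kthEig_eq {M : Matrix (Fin n) (Fin n) ℂ} (hM : M.IsHermitian) {k : ℕ}
    (h1 : 1 ≤ k) (h2 : k ≤ n) : kthEig M k = sμ hM ⟨k - 1, by omega⟩ := by
  rw [kthEig, heigList_eq_s4 hM, List.getD_eq_getElem _ _ (by simpa using by omega),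
    List.getElem_ofFn]

/-- the sorted orthonormal eigenbasis -/
noncomputable def sb {M : Matrix (Fin n) (Fin n) ℂ} (hM : M.IsHermitian) :
    OrthonormalBasis (Fin n) ℂ (EuclideanSpace ℂ (Fin n)) :=
  hM.eigenvectorBasis.reindex (Fin.revPerm.trans (Tuple.sort hM.eigenvalues)).symm

lemma mulVec_sb {M : Matrix (Fin n) (Fin n) ℂ} (hM : M.IsHermitian) (k : Fin n) :
    M.mulVec (sb hM k) = (sμ hM k : ℂ) • (sb hM k : EuclideanSpace ℂ (Fin n)) := by
  have h := hM.mulVec_eigenvectorBasis ((Fin.revPerm.trans (Tuple.sort hM.eigenvalues)) k)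
  rw [sb, OrthonormalBasis.reindex_apply, Equiv.symm_symm]
  rw [RCLike.real_smul_eq_coe_smul (K := ℂ)] at h
  exact h

section basisLemmas

variable (b : OrthonormalBasis (Fin n) ℂ (EuclideanSpace ℂ (Fin n)))

lemma repr_eq_zero_of_mem_span {s : Set (Fin n)} {x : EuclideanSpace ℂ (Fin n)}
    (hx : x ∈ span ℂ (b '' s)) {k : Fin n} (hk : k ∉ s) : b.repr x k = 0 := by
  rw [OrthonormalBasis.repr_apply_apply]
  induction hx using Submodule.span_induction with
  | mem y hy =>
    obtain ⟨l, hl, rfl⟩ := hy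
    exact b.orthonormal.2 (fun h => hk (h ▸ hl))
  | zero => exact inner_zero_right _
  | add y z _ _ hy hz => rw [inner_add_right, hy, hz, add_zero]
  | smul a y _ hy => rw [inner_smul_right, hy, mul_zero]

lemma finrank_span_ob (s : Finset (Fin n)) :
    Module.finrank ℂ (span ℂ (b '' ↑s)) = s.card := by
  have hli : LinearIndependent ℂ (fun k : ↥s => b k) :=
    (b.orthonormal.comp _ Subtype.val_injective).linearIndependent
  rw [Set.image_eq_range]
  exact (finrank_span_eq_card hli).trans (Fintype.card_coe s)

variable {μ : Fin n → ℝ} {M : Matrix (Fin n) (Fin n) ℂ}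

lemma mulVec_repr (hMb : ∀ k, M.mulVec (b k) = (μ k : ℂ) • (b k : EuclideanSpace ℂ (Fin n)))
    (x : EuclideanSpace ℂ (Fin n)) :
    M.mulVec x = ∑ k, ((μ k : ℂ) * b.repr x k) • (b k : EuclideanSpace ℂ (Fin n)) := by
  conv_lhs => rw [← b.sum_repr x]
  have h1 : M.mulVec (∑ k, b.repr x k • (b k : EuclideanSpace ℂ (Fin n)))
      = ∑ k, M.mulVec (b.repr x k • (b k : EuclideanSpace ℂ (Fin n))) :=
    map_sum (Matrix.mulVecLin M) _ _
  simp only [WithLp.ofLp_sum, WithLp.ofLp_smul]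
  rw [h1]
  refine Finset.sum_congr rfl fun k _ => ?_
  rw [Matrix.mulVec_smul, hMb k, smul_smul, mul_comm]

lemma inner_mulVec (hMb : ∀ k, M.mulVec (b k) = (μ k : ℂ) • (b k : EuclideanSpace ℂ (Fin n)))
    (x : EuclideanSpace ℂ (Fin n)) :
    (inner ℂ x (WithLp.toLp 2 (M.mulVec x) : EuclideanSpace ℂ (Fin n)) : ℂ)
      = ((∑ k, μ k * Complex.normSq (b.repr x k) : ℝ) : ℂ) := by
  have hx : (WithLp.toLp 2 (M.mulVec x) : EuclideanSpace ℂ (Fin n))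
      = ∑ k, ((μ k : ℂ) * b.repr x k) • (b k : EuclideanSpace ℂ (Fin n)) :=
    congrArg (WithLp.toLp 2) (mulVec_repr b hMb x)
  rw [hx]
  nth_rewrite 1 [← b.sum_repr x]
  rw [b.orthonormal.inner_sum]
  push_cast
  refine Finset.sum_congr rfl fun k _ => ?_
  rw [← Complex.mul_conj (b.repr x k)]
  ring

lemma inner_self_repr (x : EuclideanSpace ℂ (Fin n)) :
    (inner ℂ x x : ℂ) = ((∑ k, Complex.normSq (b.repr x k) : ℝ) : ℂ) := by
  conv_lhs => rw [← b.sum_repr x]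
  rw [b.orthonormal.inner_sum]
  push_cast
  refine Finset.sum_congr rfl fun k _ => ?_
  rw [← Complex.mul_conj (b.repr x k)]
  ring

lemma mulVec_eq_smul_of_repr (hMb : ∀ k, M.mulVec (b k) = (μ k : ℂ) • (b k : EuclideanSpace ℂ (Fin n)))
    (x : EuclideanSpace ℂ (Fin n)) (t : ℝ) (h : ∀ k, b.repr x k ≠ 0 → μ k = t) :
    M.mulVec x = (t : ℂ) • x := by
  rw [mulVec_repr b hMb x]
  conv_rhs => rw [← b.sum_repr x]
  simp only [WithLp.ofLp_sum, WithLp.ofLp_smul, Finset.smul_sum]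
  refine Finset.sum_congr rfl fun k _ => ?_
  by_cases hc : b.repr x k = 0
  · simp [hc]
  · rw [h k hc, smul_smul]

end basisLemmas

lemma sum_mu_le {μ : Fin n → ℝ} {c : Fin n → ℂ} {t : ℝ}
    (h : ∀ k, c k ≠ 0 → μ k ≤ t) :
    ∑ k, μ k * Complex.normSq (c k) ≤ t * ∑ k, Complex.normSq (c k) := by
  rw [Finset.mul_sum]
  refine Finset.sum_le_sum fun k _ => ?_
  by_cases hc : c k = 0
  · simp [hc]
  · exact mul_le_mul_of_nonneg_right (h k hc) (Complex.normSq_nonneg _)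

lemma sum_mu_ge {μ : Fin n → ℝ} {c : Fin n → ℂ} {t : ℝ}
    (h : ∀ k, c k ≠ 0 → t ≤ μ k) :
    t * ∑ k, Complex.normSq (c k) ≤ ∑ k, μ k * Complex.normSq (c k) := by
  rw [Finset.mul_sum]
  refine Finset.sum_le_sum fun k _ => ?_
  by_cases hc : c k = 0
  · simp [hc]
  · exact mul_le_mul_of_nonneg_right (h k hc) (Complex.normSq_nonneg _)

lemma sum_mu_eq_forall {μ : Fin n → ℝ} {c : Fin n → ℂ} {t : ℝ}
    (h : ∀ k, c k ≠ 0 → μ k ≤ t)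
    (heq : ∑ k, μ k * Complex.normSq (c k) = t * ∑ k, Complex.normSq (c k)) :
    ∀ k, c k ≠ 0 → μ k = t := by
  rw [Finset.mul_sum] at heq
  have hterm : ∀ k ∈ Finset.univ, μ k * Complex.normSq (c k) = t * Complex.normSq (c k) := by
    rw [← Finset.sum_eq_sum_iff_of_le]
    · exact heq
    · intro k _
      by_cases hc : c k = 0
      · simp [hc]
      · exact mul_le_mul_of_nonneg_right (h k hc) (Complex.normSq_nonneg _)
  intro k hc
  have := hterm k (Finset.mem_univ k)
  have hpos : 0 < Complex.normSq (c k) := by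
    rcases (Complex.normSq_pos).mpr hc with h'; exact h'
  exact mul_right_cancel₀ (ne_of_gt hpos) this

lemma finrank_inf_ge (U V : Submodule ℂ (EuclideanSpace ℂ (Fin n))) :
    Module.finrank ℂ U + Module.finrank ℂ V ≤ n + Module.finrank ℂ (U ⊓ V : Submodule ℂ _) := by
  have h := Submodule.finrank_sup_add_finrank_inf_eq U V
  have h2 : Module.finrank ℂ (U ⊔ V : Submodule ℂ _) ≤ n := by
    simpa [finrank_euclideanSpace_fin] using Submodule.finrank_le (U ⊔ V)
  omega


set_option maxHeartbeats 2000000 in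
theorem weyl_inequality_with_equality {n : ℕ} (A B : Matrix (Fin n) (Fin n) ℂ)
    (hA : A.IsHermitian) (hB : B.IsHermitian) (i j : ℕ)
    (hi : 1 ≤ i) (hi' : i ≤ n) (hj : 1 ≤ j) (hj' : j ≤ n) (hij : i + j - 1 ≤ n) :
    kthEig (A + B) (i + j - 1) ≤ kthEig A i + kthEig B j ∧
    (kthEig (A + B) (i + j - 1) = kthEig A i + kthEig B j ↔
      ∃ x : Fin n → ℂ, x ≠ 0 ∧
        (A + B).mulVec x = (kthEig (A + B) (i + j - 1) : ℂ) • x ∧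
        A.mulVec x = (kthEig A i : ℂ) • x ∧
        B.mulVec x = (kthEig B j : ℂ) • x) := by
  classical
  have hC : (A + B).IsHermitian := hA.add hB
  have hijn : 1 ≤ i + j - 1 := by omega
  set i' : Fin n := ⟨i - 1, by omega⟩ with hi'def
  set j' : Fin n := ⟨j - 1, by omega⟩ with hj'def
  set k' : Fin n := ⟨i + j - 1 - 1, by omega⟩ with hk'def
  have hkA : kthEig A i = sμ hA i' := kthEig_eq hA hi hi'
  have hkB : kthEig B j = sμ hB j' := kthEig_eq hB hj hj'
  have hkC : kthEig (A + B) (i + j - 1) = sμ hC k' := kthEig_eq hC hijn hij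
  rw [hkA, hkB, hkC]
  obtain ⟨x, hxmem, hxne⟩ : ∃ x ∈ span ℂ (sb hA '' ↑(Finset.Ici i')) ⊓ span ℂ (sb hB '' ↑(Finset.Ici j')) ⊓ span ℂ (sb hC '' ↑(Finset.Iic k')), x ≠ 0 := by
    apply Submodule.exists_mem_ne_zero_of_ne_bot
    intro hbot
    have h1 := finrank_inf_ge (span ℂ (sb hA '' ↑(Finset.Ici i'))) (span ℂ (sb hB '' ↑(Finset.Ici j')))
    have h2 := finrank_inf_ge (span ℂ (sb hA '' ↑(Finset.Ici i')) ⊓ span ℂ (sb hB '' ↑(Finset.Ici j'))) (span ℂ (sb hC '' ↑(Finset.Iic k')))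
    rw [hbot, finrank_bot] at h2
    have e1 : Module.finrank ℂ (span ℂ (sb hA '' ↑(Finset.Ici i'))) = n - (i - 1) := by
      rw [finrank_span_ob (sb hA) (Finset.Ici i'), Fin.card_Ici]
    have e2 : Module.finrank ℂ (span ℂ (sb hB '' ↑(Finset.Ici j'))) = n - (j - 1) := by
      rw [finrank_span_ob (sb hB) (Finset.Ici j'), Fin.card_Ici]
    have e3 : Module.finrank ℂ (span ℂ (sb hC '' ↑(Finset.Iic k'))) = (i + j - 1 - 1) + 1 := by
      rw [finrank_span_ob (sb hC) (Finset.Iic k'), Fin.card_Iic]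
    omega
  rw [Submodule.mem_inf, Submodule.mem_inf] at hxmem
  obtain ⟨⟨hxA, hxB⟩, hxC⟩ := hxmem
  -- vanishing of coordinates and eigenvalue bounds
  have hbA : ∀ k, (sb hA).repr x k ≠ 0 → sμ hA k ≤ sμ hA i' := by
    intro k hk
    by_cases hmem : k ∈ Finset.Ici i'
    · exact sμ_antitone hA (Finset.mem_Ici.mp hmem)
    · exact absurd (repr_eq_zero_of_mem_span (sb hA) hxA (by simpa using hmem)) hk
  have hbB : ∀ k, (sb hB).repr x k ≠ 0 → sμ hB k ≤ sμ hB j' := by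
    intro k hk
    by_cases hmem : k ∈ Finset.Ici j'
    · exact sμ_antitone hB (Finset.mem_Ici.mp hmem)
    · exact absurd (repr_eq_zero_of_mem_span (sb hB) hxB (by simpa using hmem)) hk
  have hbC : ∀ k, (sb hC).repr x k ≠ 0 → sμ hC k' ≤ sμ hC k := by
    intro k hk
    by_cases hmem : k ∈ Finset.Iic k'
    · exact sμ_antitone hC (Finset.mem_Iic.mp hmem)
    · exact absurd (repr_eq_zero_of_mem_span (sb hC) hxC (by simpa using hmem)) hk
  -- sums
  set S : ℝ := ∑ k, Complex.normSq ((sb hA).repr x k) with hSdef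
  have hSB : ∑ k, Complex.normSq ((sb hB).repr x k) = S :=
    Complex.ofReal_inj.mp ((inner_self_repr (sb hB) x).symm.trans (inner_self_repr (sb hA) x))
  have hSC : ∑ k, Complex.normSq ((sb hC).repr x k) = S :=
    Complex.ofReal_inj.mp ((inner_self_repr (sb hC) x).symm.trans (inner_self_repr (sb hA) x))
  have hSpos : 0 < S := by
    rcases (Finset.sum_nonneg fun k _ => Complex.normSq_nonneg ((sb hA).repr x k)).lt_or_eq with h | h
    · exact h
    · exfalso
      apply hxne
      have hS0 : S = 0 := by rw [hSdef]; exact h.symm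
      have h2 : (inner ℂ x x : ℂ) = ((S : ℝ) : ℂ) := inner_self_repr (sb hA) x
      rw [hS0] at h2
      exact inner_self_eq_zero.mp (h2.trans (by norm_num))
  have hiA : (inner ℂ x (WithLp.toLp 2 (A.mulVec x) : EuclideanSpace ℂ (Fin n)) : ℂ) = ((∑ k, sμ hA k * Complex.normSq ((sb hA).repr x k) : ℝ) : ℂ) :=
    inner_mulVec (sb hA) (mulVec_sb hA) x
  have hiB : (inner ℂ x (WithLp.toLp 2 (B.mulVec x) : EuclideanSpace ℂ (Fin n)) : ℂ) = ((∑ k, sμ hB k * Complex.normSq ((sb hB).repr x k) : ℝ) : ℂ) :=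
    inner_mulVec (sb hB) (mulVec_sb hB) x
  have hiC : (inner ℂ x (WithLp.toLp 2 ((A + B).mulVec x) : EuclideanSpace ℂ (Fin n)) : ℂ) = ((∑ k, sμ hC k * Complex.normSq ((sb hC).repr x k) : ℝ) : ℂ) :=
    inner_mulVec (sb hC) (mulVec_sb hC) x
  have hadd : (∑ k, sμ hC k * Complex.normSq ((sb hC).repr x k)) = (∑ k, sμ hA k * Complex.normSq ((sb hA).repr x k)) + (∑ k, sμ hB k * Complex.normSq ((sb hB).repr x k)) := by
    have : (inner ℂ x (WithLp.toLp 2 ((A + B).mulVec x) : EuclideanSpace ℂ (Fin n)) : ℂ)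
        = (inner ℂ x (WithLp.toLp 2 (A.mulVec x) : EuclideanSpace ℂ (Fin n)) : ℂ)
          + (inner ℂ x (WithLp.toLp 2 (B.mulVec x) : EuclideanSpace ℂ (Fin n)) : ℂ) := by
      rw [← inner_add_right]
      congr 1
      exact congrArg (WithLp.toLp 2) (Matrix.add_mulVec A B x)
    rw [hiA, hiB, hiC, ← Complex.ofReal_add] at this
    exact Complex.ofReal_inj.mp this
  have hRAle : (∑ k, sμ hA k * Complex.normSq ((sb hA).repr x k)) ≤ sμ hA i' * S := sum_mu_le hbA
  have hRBle : (∑ k, sμ hB k * Complex.normSq ((sb hB).repr x k)) ≤ sμ hB j' * S := by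
    have := sum_mu_le hbB
    rwa [hSB] at this
  have hRCge : sμ hC k' * S ≤ (∑ k, sμ hC k * Complex.normSq ((sb hC).repr x k)) := by
    have := sum_mu_ge hbC
    rwa [hSC] at this
  have hineq : sμ hC k' ≤ sμ hA i' + sμ hB j' := by
    have h1 : sμ hC k' * S ≤ (sμ hA i' + sμ hB j') * S := by
      rw [add_mul]
      calc sμ hC k' * S ≤ (∑ k, sμ hC k * Complex.normSq ((sb hC).repr x k)) := hRCge
        _ = (∑ k, sμ hA k * Complex.normSq ((sb hA).repr x k)) + (∑ k, sμ hB k * Complex.normSq ((sb hB).repr x k)) := hadd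
        _ ≤ _ := add_le_add hRAle hRBle
    exact le_of_mul_le_mul_right h1 hSpos
  refine ⟨hineq, ?_, ?_⟩
  · -- equality → eigenvector
    intro heq
    have hRAeq : (∑ k, sμ hA k * Complex.normSq ((sb hA).repr x k)) = sμ hA i' * S := by nlinarith [hRCge, hadd, hRAle, hRBle]
    have hRBeq : (∑ k, sμ hB k * Complex.normSq ((sb hB).repr x k)) = sμ hB j' * S := by nlinarith [hRCge, hadd, hRAle, hRBle]
    have hAx : A.mulVec x = ((sμ hA i' : ℝ) : ℂ) • x :=
      mulVec_eq_smul_of_repr (sb hA) (mulVec_sb hA) x _ (sum_mu_eq_forall hbA hRAeq)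
    have hBx : B.mulVec x = ((sμ hB j' : ℝ) : ℂ) • x :=
      mulVec_eq_smul_of_repr (sb hB) (mulVec_sb hB) x _
        (sum_mu_eq_forall hbB (by rw [hSB]; exact hRBeq))
    refine ⟨x, fun h => hxne (by simpa using congrArg (WithLp.toLp 2) h), ?_, hAx, hBx⟩
    rw [Matrix.add_mulVec, hAx, hBx, ← add_smul, heq]
    push_cast
    ring_nf
  · -- eigenvector → equality
    rintro ⟨y, hy0, hCy, hAy, hBy⟩
    have h1 : ((sμ hC k' : ℝ) : ℂ) • y = (((sμ hA i' + sμ hB j' : ℝ)) : ℂ) • y := by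
      rw [← hCy, Matrix.add_mulVec, hAy, hBy, ← add_smul]
      push_cast
      ring_nf
    have h2 : (((sμ hC k' : ℝ) : ℂ) - ((sμ hA i' + sμ hB j' : ℝ) : ℂ)) • y = 0 := by
      rw [sub_smul, h1, sub_self]
    rcases smul_eq_zero.mp h2 with h | h
    · have := sub_eq_zero.mp h
      exact_mod_cast this
    · exact absurd h hy0
end

section
/- Let n and t be integers with 1 ≤ t ≤ n−3, and let P_{n,t}^{++} be the graph obtained from the path P_{n−1} = v₁…v_{n−1} by adding a new vertex u together with the two edges u v_t and u v_{t+2}. Then the second largest Laplacian eigenvalue satisfies μ₂(P_{n,t}^{++}) < 4. -/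
open Matrix

/-- The graph `P_{n,t}^{++}`: a path `v₁ … v_{n-1}` (vertices `0, …, n-2`) together with an
extra vertex `u` (vertex `n-1`) adjacent exactly to `v_t` (vertex `t-1`) and `v_{t+2}`
(vertex `t+1`). -/
def Ppp (n t : ℕ) : SimpleGraph (Fin n) :=
  SimpleGraph.fromRel (fun i j =>
    (i.val + 1 = j.val ∧ j.val ≤ n - 2) ∨
    (i.val = n - 1 ∧ (j.val = t - 1 ∨ j.val = t + 1)))


set_option maxHeartbeats 1600000

section Aux
open Finset

/-- chain inequality -/
lemma chainA (Z : ℕ → ℝ) : ∀ k : ℕ,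
    2 * (Z k)^2 ≤ (2*(k:ℝ)+1) * (2*(Z 0)^2 + ∑ i ∈ range k, (Z i + Z (i+1))^2) := by
  intro k
  induction k with
  | zero => simp
  | succ k ih =>
    have hS : (0:ℝ) ≤ 2*(Z 0)^2 + ∑ i ∈ range k, (Z i + Z (i+1))^2 := by positivity
    rw [Finset.sum_range_succ]
    push_cast
    nlinarith [sq_nonneg ((2*(k:ℝ)+3) * Z k + (2*(k:ℝ)+1) * Z (k+1)), mul_nonneg (by positivity : (0:ℝ) ≤ 2) hS]

/-- reversed chain inequality -/
lemma chainA' (W : ℕ → ℝ) (k : ℕ) :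
    2 * (W 0)^2 ≤ (2*(k:ℝ)+1) * (2*(W k)^2 + ∑ i ∈ range k, (W i + W (i+1))^2) := by
  have h := chainA (fun i => W (k - i)) k
  simp only [Nat.sub_self, Nat.sub_zero] at h
  have hsum : ∑ i ∈ range k, ((fun i => W (k - i)) i + (fun i => W (k - i)) (i+1))^2
      = ∑ i ∈ range k, (W i + W (i+1))^2 := by
    rw [← Finset.sum_range_reflect]
    apply Finset.sum_congr rfl
    intro i hi
    simp only [mem_range] at hi
    have h1 : k - (k - 1 - i) = i + 1 := by omega
    have h2 : k - 1 - i + 1 = k - i := by omega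
    have h3 : k - (k - i) = i := by omega
    simp only []
    rw [h2, h1, h3]
    ring
  rw [hsum] at h
  linarith [h]

/-- telescoping identity -/
lemma chainIdent (Z : ℕ → ℝ) : ∀ k : ℕ,
    ∑ i ∈ range k, (Z i - Z (i+1))^2 + ∑ i ∈ range k, (Z i + Z (i+1))^2
      = 4 * ∑ i ∈ range k, (Z i)^2 - 2*(Z 0)^2 + 2*(Z k)^2 := by
  intro k
  induction k with
  | zero => simp
  | succ k ih =>
    rw [Finset.sum_range_succ, Finset.sum_range_succ, Finset.sum_range_succ (fun i => (Z i)^2)]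
    nlinarith [ih]

/-- zero chain -/
lemma chainZero (Z : ℕ → ℝ) (h0 : Z 0 = 0) (k : ℕ) (h : ∀ i < k, Z i + Z (i+1) = 0) :
    ∀ i ≤ k, Z i = 0 := by
  intro i hi
  induction i with
  | zero => exact h0
  | succ i ih =>
    have := h i (by omega)
    have := ih (by omega)
    linarith

lemma keyReal (n t : ℕ) (ht : 1 ≤ t) (ht' : t + 3 ≤ n) (X : ℕ → ℝ)
    (hcon : X (t-1) + X (t+1) = X t + X (n-1))
    (hnz : ∃ k, k < n ∧ X k ≠ 0) :
    (∑ i ∈ range (n-2), (X i - X (i+1))^2) + (X (n-1) - X (t-1))^2 + (X (n-1) - X (t+1))^2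
      < 4 * ∑ a ∈ range n, (X a)^2 := by
  obtain ⟨s, rfl⟩ : ∃ s, t = s + 1 := ⟨t - 1, by omega⟩
  obtain ⟨k2, rfl⟩ : ∃ k2, n = s + 4 + k2 := ⟨n - (s + 4), by omega⟩
  have e1 : s + 1 - 1 = s := by omega
  have e2 : s + 4 + k2 - 2 = s + 2 + k2 := by omega
  have e3 : s + 4 + k2 - 1 = s + 3 + k2 := by omega
  have e4 : s + 1 + 1 = s + 2 := by omega
  simp only [e1, e2, e3, e4] at hcon ⊢
  -- edge sum split
  have hsplitE : ∑ i ∈ range (s + 2 + k2), (X i - X (i+1))^2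
      = (∑ i ∈ range s, (X i - X (i+1))^2) + (X s - X (s+1))^2 + (X (s+1) - X (s+2))^2
        + ∑ i ∈ range k2, (X (s+2+i) - X (s+2+i+1))^2 := by
    rw [Finset.sum_range_add (fun i => (X i - X (i+1))^2) (s+2) k2,
        Finset.sum_range_succ, Finset.sum_range_succ, e4]
    try ring
  -- vertex sum split
  have hsplitV : ∑ a ∈ range (s + 4 + k2), (X a)^2
      = (∑ i ∈ range s, (X i)^2) + (X s)^2 + (X (s+1))^2
        + (∑ i ∈ range k2, (X (s+2+i))^2) + (X (s+2+k2))^2 + (X (s+3+k2))^2 := by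
    rw [show s + 4 + k2 = (s + 2) + (k2 + 2) by omega,
        Finset.sum_range_add (fun i => (X i)^2) (s+2) (k2+2),
        Finset.sum_range_succ, Finset.sum_range_succ,
        Finset.sum_range_succ, Finset.sum_range_succ,
        show s + 2 + (k2 + 1) = s + 3 + k2 by omega, e4]
    try ring
  have identL := chainIdent X s
  have identR := chainIdent (fun i => X (s + 2 + i)) k2
  have hre : ∀ i ∈ range k2, (X (s+2+i) - X (s+2+(i+1)))^2 = (X (s+2+i) - X (s+2+i+1))^2 := by
    intro i _; rw [show s+2+(i+1) = s+2+i+1 by omega]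
  have hre2 : ∀ i ∈ range k2, (X (s+2+i) + X (s+2+(i+1)))^2 = (X (s+2+i) + X (s+2+i+1))^2 := by
    intro i _; rw [show s+2+(i+1) = s+2+i+1 by omega]
  rw [Finset.sum_congr rfl hre, Finset.sum_congr rfl hre2, show s+2+0 = s+2 by omega] at identR
  set x0 := X 0 with hx0
  set A := X s with hA
  set C := X (s+1) with hC
  set B := X (s+2) with hB
  set Ee := X (s+2+k2) with hE
  set Uu := X (s+3+k2) with hU
  set SLm := ∑ i ∈ range s, (X i - X (i+1))^2 with hSLm
  set SLp := ∑ i ∈ range s, (X i + X (i+1))^2 with hSLp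
  set QL := ∑ i ∈ range s, (X i)^2 with hQL
  set SRm := ∑ i ∈ range k2, (X (s+2+i) - X (s+2+i+1))^2 with hSRm
  set SRp := ∑ i ∈ range k2, (X (s+2+i) + X (s+2+i+1))^2 with hSRp
  set QR := ∑ i ∈ range k2, (X (s+2+i))^2 with hQR
  have hmid : (A - C)^2 + (C - B)^2 + (Uu - A)^2 + (Uu - B)^2
      = 2*A^2 + 2*B^2 + 2*C^2 + 2*Uu^2 - 2*(C + Uu)^2 := by
    linear_combination (-2*(C+Uu)) * hcon
  have h1 : (0:ℝ) ≤ SLp := Finset.sum_nonneg fun i _ => sq_nonneg _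
  have h2 : (0:ℝ) ≤ SRp := Finset.sum_nonneg fun i _ => sq_nonneg _
  have hRG : 0 < 2*x0^2 + SLp + SRp + 2*C^2 + 2*Ee^2 + 2*Uu^2 + 2*(C+Uu)^2 := by
    have hge : (0:ℝ) ≤ 2*x0^2 + SLp + SRp + 2*C^2 + 2*Ee^2 + 2*Uu^2 + 2*(C+Uu)^2 := by positivity
    rcases lt_or_eq_of_le hge with h | h
    · exact h
    exfalso
    have sx0 := sq_nonneg x0; have sC := sq_nonneg C; have sE := sq_nonneg Ee
    have sU := sq_nonneg Uu; have sCU := sq_nonneg (C+Uu)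
    have hx00 : x0 = 0 := by
      have : x0^2 = 0 := le_antisymm (by linarith) sx0
      exact pow_eq_zero_iff (n := 2) (by norm_num) |>.mp this
    have hC0 : C = 0 := by
      have : C^2 = 0 := le_antisymm (by linarith) sC
      exact pow_eq_zero_iff (n := 2) (by norm_num) |>.mp this
    have hE0 : Ee = 0 := by
      have : Ee^2 = 0 := le_antisymm (by linarith) sE
      exact pow_eq_zero_iff (n := 2) (by norm_num) |>.mp this
    have hU0 : Uu = 0 := by
      have : Uu^2 = 0 := le_antisymm (by linarith) sU
      exact pow_eq_zero_iff (n := 2) (by norm_num) |>.mp this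
    have hSLp0 : SLp = 0 := le_antisymm (by linarith) h1
    have hSRp0 : SRp = 0 := le_antisymm (by linarith) h2
    have hLpair : ∀ i < s, X i + X (i+1) = 0 := by
      intro i hi
      have h := (Finset.sum_eq_zero_iff_of_nonneg
        (fun j (_ : j ∈ range s) => sq_nonneg (X j + X (j+1)))).mp (hSLp.symm.trans hSLp0) i (mem_range.mpr hi)
      exact pow_eq_zero_iff (n := 2) (by norm_num) |>.mp h
    have hRpair : ∀ i < k2, X (s+2+i) + X (s+2+i+1) = 0 := by
      intro i hi
      have h := (Finset.sum_eq_zero_iff_of_nonneg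
        (fun j (_ : j ∈ range k2) => sq_nonneg (X (s+2+j) + X (s+2+j+1)))).mp (hSRp.symm.trans hSRp0) i (mem_range.mpr hi)
      exact pow_eq_zero_iff (n := 2) (by norm_num) |>.mp h
    have hLz : ∀ i ≤ s, X i = 0 := chainZero X (by rw [← hx0]; exact hx00) s hLpair
    have hRz : ∀ i ≤ k2, X (s+2+(k2-i)) = 0 := by
      apply chainZero (fun i => X (s+2+(k2-i)))
      · show X (s+2+(k2-0)) = 0
        rw [show k2 - 0 = k2 from rfl, ← hE]; exact hE0
      · intro i hi
        have h := hRpair (k2-i-1) (by omega)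
        show X (s+2+(k2-i)) + X (s+2+(k2-(i+1))) = 0
        rw [show k2 - (i+1) = k2 - i - 1 by omega, show s+2+(k2-i) = s+2+(k2-i-1)+1 by omega]
        linarith [h]
    have hall : ∀ k, k < s + 4 + k2 → X k = 0 := by
      intro k hk
      by_cases hk1 : k ≤ s
      · exact hLz k hk1
      by_cases hk2 : k = s + 1
      · rw [hk2, ← hC]; exact hC0
      by_cases hk3 : k ≤ s + 2 + k2
      · have h := hRz (s+2+k2-k) (by omega)
        rwa [show s+2+(k2-(s+2+k2-k)) = k by omega] at h
      · rw [show k = s+3+k2 by omega, ← hU]; exact hU0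
    obtain ⟨k, hk, hne⟩ := hnz
    exact hne (hall k hk)
  rw [hsplitE, hsplitV]
  linarith [identL, identR, hmid, hRG, sq_nonneg B]

lemma ite_and_split (P Q : Prop) [Decidable P] [Decidable Q] (r : ℝ) :
    (if P ∧ Q then r else 0) = if P then (if Q then r else 0) else 0 := by
  by_cases hP : P <;> by_cases hQ : Q <;> simp [hP, hQ]

lemma ite_or_split (P Q : Prop) [Decidable P] [Decidable Q] (h : ¬(P ∧ Q)) (r : ℝ) :
    (if P ∨ Q then r else 0) = (if P then r else 0) + (if Q then r else 0) := by
  by_cases hP : P <;> by_cases hQ : Q <;> simp [hP, hQ] <;> exact absurd ⟨hP, hQ⟩ h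

lemma doubleSum (n t : ℕ) (ht : 1 ≤ t) (ht' : t + 3 ≤ n) (X : ℕ → ℝ) :
    (∑ a ∈ range n, ∑ b ∈ range n,
      (if ((a + 1 = b ∧ b ≤ n - 2) ∨ (a = n - 1 ∧ (b = t - 1 ∨ b = t + 1))) then (X a - X b)^2 else 0))
    = (∑ i ∈ range (n-2), (X i - X (i+1))^2) + (X (n-1) - X (t-1))^2 + (X (n-1) - X (t+1))^2 := by
  have hsplit : ∀ a ∈ range n, ∀ b ∈ range n,
      (if ((a + 1 = b ∧ b ≤ n - 2) ∨ (a = n - 1 ∧ (b = t - 1 ∨ b = t + 1))) then (X a - X b)^2 else 0)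
      = (if b = a + 1 then (if a + 1 ≤ n - 2 then (X a - X b)^2 else 0) else 0)
        + ((if b = t - 1 then (if a = n - 1 then (X a - X b)^2 else 0) else 0)
          + (if b = t + 1 then (if a = n - 1 then (X a - X b)^2 else 0) else 0)) := by
    intro a ha b hb
    simp only [mem_range] at ha hb
    split_ifs <;> first | ring1 | (exfalso; omega)
  rw [Finset.sum_congr rfl (fun a ha => Finset.sum_congr rfl (hsplit a ha))]
  simp only [Finset.sum_add_distrib]
  have hS1 : (∑ a ∈ range n, ∑ b ∈ range n,
      (if b = a + 1 then (if a + 1 ≤ n - 2 then (X a - X b)^2 else 0) else 0))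
      = ∑ i ∈ range (n-2), (X i - X (i+1))^2 := by
    rw [Finset.sum_congr rfl
      (fun a _ => Finset.sum_ite_eq' (range n) (a+1) (fun b => if a + 1 ≤ n - 2 then (X a - X b)^2 else 0))]
    have h1 : ∀ a ∈ range n, (if a + 1 ∈ range n then (if a + 1 ≤ n - 2 then (X a - X (a+1))^2 else 0) else 0)
        = (if a + 1 ≤ n - 2 then (X a - X (a+1))^2 else 0) := by
      intro a ha
      simp only [mem_range] at ha
      by_cases h : a + 1 ≤ n - 2
      · have hm : a + 1 ∈ range n := mem_range.mpr (by omega)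
        simp [hm, h]
      · simp [h]
    rw [Finset.sum_congr rfl h1,
        ← Finset.sum_subset (Finset.range_subset_range.mpr (by omega : n - 2 ≤ n))
          (fun a _ ha => by rw [if_neg (by simp only [mem_range] at ha; omega)])]
    exact Finset.sum_congr rfl fun a ha => if_pos (by simp only [mem_range] at ha; omega)
  have hS2 : ∀ (c : ℕ), c < n → (∑ a ∈ range n, ∑ b ∈ range n,
      (if b = c then (if a = n - 1 then (X a - X b)^2 else 0) else 0))
      = (X (n-1) - X c)^2 := by
    intro c hc
    rw [Finset.sum_congr rfl
      (fun a _ => Finset.sum_ite_eq' (range n) c (fun b => if a = n - 1 then (X a - X b)^2 else 0)),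
      Finset.sum_congr rfl (fun a _ => if_pos (mem_range.mpr hc)),
      Finset.sum_ite_eq' (range n) (n-1) (fun a => (X a - X c)^2),
      if_pos (mem_range.mpr (by omega : n - 1 < n))]
  rw [hS1, hS2 (t-1) (by omega), hS2 (t+1) (by omega)]
  ring

open Matrix in
lemma lapMat_isHermitian {V : Type} [Fintype V] [DecidableEq V] (G : SimpleGraph V) :
    (lapMat G).IsHermitian := by
  unfold lapMat
  letI := Classical.decRel G.Adj
  exact (SimpleGraph.posSemidef_lapMatrix ℝ G).1

open Matrix in
lemma quadPpp (n t : ℕ) (ht : 1 ≤ t) (ht' : t + 3 ≤ n) (x : Fin n → ℝ) (X : ℕ → ℝ)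
    (hX : ∀ i : Fin n, X i.val = x i) :
    dotProduct x (lapMat (Ppp n t) *ᵥ x)
      = ∑ a ∈ range n, ∑ b ∈ range n,
          (if ((a + 1 = b ∧ b ≤ n - 2) ∨ (a = n - 1 ∧ (b = t - 1 ∨ b = t + 1))) then (X a - X b)^2 else 0) := by
  classical
  have h1 : dotProduct x (lapMat (Ppp n t) *ᵥ x)
      = (∑ i : Fin n, ∑ j : Fin n, if (Ppp n t).Adj i j then (x i - x j)^2 else 0) / 2 := by
    rw [← Matrix.toLinearMap₂'_apply', lapMat]
    exact SimpleGraph.lapMatrix_toLinearMap₂' (Ppp n t) (R := ℝ) x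
  rw [h1]
  have key : ∀ i j : Fin n, (if (Ppp n t).Adj i j then (x i - x j)^2 else 0)
      = (if ((i.val + 1 = j.val ∧ j.val ≤ n - 2) ∨ (i.val = n - 1 ∧ (j.val = t - 1 ∨ j.val = t + 1)))
          then (X i.val - X j.val)^2 else 0)
        + (if ((j.val + 1 = i.val ∧ i.val ≤ n - 2) ∨ (j.val = n - 1 ∧ (i.val = t - 1 ∨ i.val = t + 1)))
          then (X j.val - X i.val)^2 else 0) := by
    intro i j
    have hi := i.isLt
    have hj := j.isLt
    rw [hX i, hX j]
    simp only [Ppp, SimpleGraph.fromRel_adj, ne_eq, Fin.ext_iff]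
    split_ifs <;> first | ring1 | (exfalso; omega)
  rw [Finset.sum_congr rfl (fun i _ => Finset.sum_congr rfl (fun j _ => key i j))]
  simp only [Finset.sum_add_distrib]
  have hsymm : (∑ i : Fin n, ∑ j : Fin n,
      (if ((j.val + 1 = i.val ∧ i.val ≤ n - 2) ∨ (j.val = n - 1 ∧ (i.val = t - 1 ∨ i.val = t + 1)))
        then (X j.val - X i.val)^2 else 0))
      = ∑ i : Fin n, ∑ j : Fin n,
      (if ((i.val + 1 = j.val ∧ j.val ≤ n - 2) ∨ (i.val = n - 1 ∧ (j.val = t - 1 ∨ j.val = t + 1)))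
        then (X i.val - X j.val)^2 else 0) := Finset.sum_comm
  rw [hsymm]
  have hfin : (∑ i : Fin n, ∑ j : Fin n,
      (if ((i.val + 1 = j.val ∧ j.val ≤ n - 2) ∨ (i.val = n - 1 ∧ (j.val = t - 1 ∨ j.val = t + 1)))
        then (X i.val - X j.val)^2 else 0))
      = ∑ a ∈ range n, ∑ b ∈ range n,
          (if ((a + 1 = b ∧ b ≤ n - 2) ∨ (a = n - 1 ∧ (b = t - 1 ∨ b = t + 1))) then (X a - X b)^2 else 0) := by
    rw [← Fin.sum_univ_eq_sum_range (fun a => ∑ b ∈ range n,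
      (if ((a + 1 = b ∧ b ≤ n - 2) ∨ (a = n - 1 ∧ (b = t - 1 ∨ b = t + 1))) then (X a - X b)^2 else 0)) n]
    exact Finset.sum_congr rfl fun i _ =>
      (Fin.sum_univ_eq_sum_range (fun b =>
        (if ((i.val + 1 = b ∧ b ≤ n - 2) ∨ (i.val = n - 1 ∧ (b = t - 1 ∨ b = t + 1)))
          then (X i.val - X b)^2 else 0)) n).symm ▸ rfl
  rw [hfin]
  ring

lemma two_le_countP (c : ℝ) (l : List ℝ) (h : 1 < l.length) (h0 : c ≤ l[0]'(by omega))
    (h1 : c ≤ l[1]'h) :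
    2 ≤ l.countP (fun y => decide (c ≤ y)) := by
  match l, h, h0, h1 with
  | a :: b :: rest, _, h0, h1 =>
    simp only [List.getElem_cons_zero, List.getElem_cons_succ] at h0 h1
    rw [List.countP_cons, List.countP_cons]
    simp only [decide_eq_true_eq]
    rw [if_pos h1, if_pos h0]
    omega

end Aux

theorem Ppp_mu_two_lt_four (n t : ℕ) (ht : 1 ≤ t) (ht' : t + 3 ≤ n) :
    lapμ (Ppp n t) 2 < 4 := by
  by_contra hcontra
  push_neg at hcontra
  have hn4 : 4 ≤ n := by omega
  set G := Ppp n t with hG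
  have hherm : (lapMat G).IsHermitian := lapMat_isHermitian G
  set ev := hherm.eigenvalues with hev
  set l := (Finset.univ.val.map ev).sort (· ≥ ·) with hl
  have hlist : heigList (lapMat G) = l := by rw [heigList, dif_pos hherm]
  have hlen : l.length = n := by
    rw [hl, Multiset.length_sort, Multiset.card_map]
    simp
  have h1lt : 1 < l.length := by omega
  have h0lt : 0 < l.length := by omega
  have h41 : 4 ≤ l[1]'h1lt := by
    have : lapμ G 2 = l[1]'h1lt := by
      rw [lapμ, kthEig, hlist]
      have : (2:ℕ) - 1 = 1 := rfl
      rw [this, List.getD_eq_getElem l 0 h1lt]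
    rwa [this] at hcontra
  have hsorted : l.Pairwise (· ≥ ·) := Multiset.pairwise_sort _ _
  have h40 : 4 ≤ l[0]'h0lt := by
    have := hsorted.rel_get_of_lt (a := ⟨0, h0lt⟩) (b := ⟨1, h1lt⟩) (by simp [Fin.mk_lt_mk])
    simp only [List.get_eq_getElem] at this
    linarith
  -- two distinct eigenvalue indices with eigenvalue ≥ 4
  have hcount : 2 ≤ Multiset.countP (fun y => 4 ≤ y) (Finset.univ.val.map ev) := by
    have hms : (Finset.univ.val.map ev) = (l : Multiset ℝ) := (Multiset.sort_eq _ _).symm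
    rw [hms]
    have := two_le_countP 4 l h1lt h40 h41
    simpa [Multiset.coe_countP] using this
  have hcard : 2 ≤ (Finset.univ.filter (fun i => 4 ≤ ev i)).card := by
    rw [Multiset.countP_map] at hcount
    exact hcount
  obtain ⟨i, hiS, j, hjS, hij⟩ := Finset.one_lt_card.mp
    (show 1 < (Finset.univ.filter (fun i : Fin n => 4 ≤ ev i)).card by omega)
  rw [Finset.mem_filter] at hiS hjS
  have hevi : 4 ≤ ev i := hiS.2
  have hevj : 4 ≤ ev j := hjS.2
  -- eigenvectors
  set w1 : Fin n → ℝ := ⇑(hherm.eigenvectorBasis i) with hw1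
  set w2 : Fin n → ℝ := ⇑(hherm.eigenvectorBasis j) with hw2
  have hON := hherm.eigenvectorBasis.orthonormal
  have hONite := orthonormal_iff_ite.mp hON
  have h11 : ∑ k : Fin n, w1 k * w1 k = 1 := by
    have h2 := hONite i i
    rw [if_pos rfl, PiLp.inner_apply] at h2
    simpa [RCLike.inner_apply, starRingEnd_apply, hw1, ← pow_two] using h2
  have h22 : ∑ k : Fin n, w2 k * w2 k = 1 := by
    have h2 := hONite j j
    rw [if_pos rfl, PiLp.inner_apply] at h2
    simpa [RCLike.inner_apply, starRingEnd_apply, hw2, ← pow_two] using h2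
  have h12 : ∑ k : Fin n, w1 k * w2 k = 0 := by
    have h2 := hONite i j
    rw [if_neg hij, PiLp.inner_apply] at h2
    simpa [RCLike.inner_apply, starRingEnd_apply, hw1, hw2, mul_comm] using h2
  have heig1 : lapMat G *ᵥ w1 = ev i • w1 := hherm.mulVec_eigenvectorBasis i
  have heig2 : lapMat G *ᵥ w2 = ev j • w2 := hherm.mulVec_eigenvectorBasis j
  -- choose coefficients lying in the hyperplane
  have hta : t - 1 < n := by omega
  have htc : t < n := by omega
  have htb : t + 1 < n := by omega
  have htu : n - 1 < n := by omega
  set φ : (Fin n → ℝ) → ℝ :=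
    fun v => v ⟨t-1, hta⟩ + v ⟨t+1, htb⟩ - v ⟨t, htc⟩ - v ⟨n-1, htu⟩ with hφ
  obtain ⟨d1, d2, hd, hdphi⟩ :
      ∃ d1 d2 : ℝ, ¬(d1 = 0 ∧ d2 = 0) ∧ d1 * φ w1 + d2 * φ w2 = 0 := by
    by_cases h : φ w1 = 0 ∧ φ w2 = 0
    · exact ⟨1, 0, by simp, by rw [h.1, h.2]; ring⟩
    · refine ⟨φ w2, -(φ w1), ?_, by ring⟩
      rintro ⟨hz1, hz2⟩
      exact h ⟨by linarith [neg_eq_zero.mp hz2], hz1⟩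
  set x : Fin n → ℝ := fun k => d1 * w1 k + d2 * w2 k with hx
  have hpos : 0 < d1^2 + d2^2 := by
    rcases not_and_or.mp hd with h | h
    · positivity
    · positivity
  have hsum : ∑ k : Fin n, (x k)^2 = d1^2 + d2^2 := by
    have hpt : ∀ k : Fin n, (x k)^2
        = d1^2*(w1 k * w1 k) + d2^2*(w2 k * w2 k) + (2*d1*d2)*(w1 k * w2 k) := by
      intro k; rw [hx]; ring
    rw [Finset.sum_congr rfl (fun k _ => hpt k), Finset.sum_add_distrib, Finset.sum_add_distrib,
        ← Finset.mul_sum, ← Finset.mul_sum, ← Finset.mul_sum, h11, h22, h12]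
    ring
  have hquad : dotProduct x (lapMat G *ᵥ x) = ev i * d1^2 + ev j * d2^2 := by
    have hxvec : x = d1 • w1 + d2 • w2 := by
      funext k; simp [hx, Pi.add_apply, Pi.smul_apply, smul_eq_mul]
    have hLx : lapMat G *ᵥ x = fun k => ev i * d1 * w1 k + ev j * d2 * w2 k := by
      rw [hxvec, Matrix.mulVec_add, Matrix.mulVec_smul, Matrix.mulVec_smul, heig1, heig2]
      funext k
      simp [Pi.add_apply, Pi.smul_apply, smul_eq_mul]
      ring
    rw [hLx, dotProduct]
    have hpt : ∀ k : Fin n, x k * (ev i * d1 * w1 k + ev j * d2 * w2 k)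
        = (ev i * d1^2)*(w1 k * w1 k) + (ev j * d2^2)*(w2 k * w2 k)
          + (ev i * d1 * d2 + ev j * d1 * d2)*(w1 k * w2 k) := by
      intro k; rw [hx]; ring
    rw [Finset.sum_congr rfl (fun k _ => hpt k), Finset.sum_add_distrib, Finset.sum_add_distrib,
        ← Finset.mul_sum, ← Finset.mul_sum, ← Finset.mul_sum, h11, h22, h12]
    ring
  -- the vector in ℕ-indexed form
  set X : ℕ → ℝ := fun k => if h : k < n then x ⟨k, h⟩ else 0 with hXdef
  have hXi : ∀ i : Fin n, X i.val = x i := by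
    intro i
    rw [hXdef]
    simp [i.isLt]
  have hconX : X (t-1) + X (t+1) = X t + X (n-1) := by
    have e1 : X (t-1) = x ⟨t-1, hta⟩ := by rw [hXdef]; simp [hta]
    have e2 : X (t+1) = x ⟨t+1, htb⟩ := by rw [hXdef]; simp [htb]
    have e3 : X t = x ⟨t, htc⟩ := by rw [hXdef]; simp [htc]
    have e4 : X (n-1) = x ⟨n-1, htu⟩ := by rw [hXdef]; simp [htu]
    rw [e1, e2, e3, e4]
    have hphix : φ x = d1 * φ w1 + d2 * φ w2 := by simp only [hφ, hx]; ring
    have hzz : φ x = 0 := by rw [hphix, hdphi]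
    simp only [hφ] at hzz
    linarith [hzz]
  have hnzX : ∃ k, k < n ∧ X k ≠ 0 := by
    by_contra hz
    push_neg at hz
    have : ∀ k : Fin n, x k = 0 := fun k => by
      have := hz k.val k.isLt
      rwa [hXi k] at this
    have hzero : ∑ k : Fin n, (x k)^2 = 0 :=
      Finset.sum_eq_zero fun k _ => by rw [this k]; ring
    rw [hsum] at hzero
    linarith
  have hXsum : ∑ a ∈ Finset.range n, (X a)^2 = d1^2 + d2^2 := by
    rw [← Fin.sum_univ_eq_sum_range (fun a => (X a)^2) n]
    rw [← hsum]
    exact Finset.sum_congr rfl fun k _ => by rw [hXi k]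
  have hup : dotProduct x (lapMat G *ᵥ x) < 4 * (d1^2 + d2^2) := by
    rw [quadPpp n t ht ht' x X hXi, doubleSum n t ht ht' X, ← hXsum]
    exact keyReal n t ht ht' X hconX hnzX
  rw [hquad] at hup
  nlinarith [sq_nonneg d1, sq_nonneg d2]
end
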